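/- For every integer k ≥ 1 and every real c > 0 there exists μ ∈ (0, 1/2) such that 2 · g(μ)^c / (μ^μ (1−μ)^{1−μ}) > 4 · (1 − 2^{−k})^{2c}. Consequently, the maximum over μ ∈ [0,1] of the exponential growth rate 2 · g(μ)^c / (μ^μ (1−μ)^{1−μ}) of the second moment of the number of solutions of random k-SAT strictly exceeds its value 4(1−2^{−k})^{2c} at μ = 1/2, which is the squared growth rate of the first moment. -/

import Mathlib

open Real Set Filter Topology

lemma exists_gt_of_deriv_neg {f : ℝ → ℝ} {x D : ℝ}
    (hf : HasDerivAt f D x) (hD : D < 0) {a : ℝ} (ha : a < x) :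
    ∃ y ∈ Set.Ioo a x, f x < f y := by
  have hslope : Tendsto (slope f x) (𝓝[<] x) (𝓝 D) := by
    refine (hasDerivAt_iff_tendsto_slope.mp hf).mono_left ?_
    exact nhdsWithin_mono x (fun y hy => ne_of_lt hy)
  have h1 : ∀ᶠ y in 𝓝[<] x, slope f x y < 0 := hslope.eventually_lt_const hD
  have h2 : Ioo a x ∈ 𝓝[<] x := Ioo_mem_nhdsLT_of_mem ⟨ha, le_rfl⟩
  obtain ⟨y, hy1, hy2⟩ := (h1.and (eventually_of_mem h2 (fun y hy => hy))).exists
  refine ⟨y, hy2, ?_⟩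
  rw [slope_def_field, div_neg_iff] at hy1
  rcases hy1 with ⟨h, _⟩ | ⟨_, h⟩
  · linarith
  · linarith [hy2.2]

theorem second_moment_of_solutions_fails (k : ℕ) (hk : 1 ≤ k) (c : ℝ) (hc : 0 < c) :
    ∃ μ ∈ Set.Ioo (0 : ℝ) (1 / 2),
      4 * (1 - 1 / 2 ^ k) ^ (2 * c) <
        2 * (1 - 2 / 2 ^ k + ((1 - μ) / 2) ^ k) ^ c / (μ ^ μ * (1 - μ) ^ (1 - μ)) := by
  set A : ℝ := 1 - 2 / 2 ^ k with hA
  set b : ℝ := 1 - 1 / 2 ^ k with hb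
  have h2k : (2:ℝ) ≤ 2 ^ k := by
    calc (2:ℝ) = 2 ^ 1 := (pow_one 2).symm
    _ ≤ 2 ^ k := pow_le_pow_right₀ one_le_two hk
  have hbpos : 0 < b := by
    have : (1:ℝ) / 2 ^ k ≤ 1 / 2 := by
      apply div_le_div_of_nonneg_left <;> linarith
    simp only [hb]; linarith
  have hsq : A + ((1 - (1/2:ℝ)) / 2) ^ k = b ^ 2 := by
    have h4 : ((1 - (1/2:ℝ)) / 2) ^ k = ((1/2:ℝ) ^ k) ^ 2 := by
      rw [show (1 - (1/2:ℝ)) / 2 = (1/2) ^ 2 by norm_num, ← pow_mul, ← pow_mul,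
        Nat.mul_comm]
    rw [h4, hA, hb]
    have h2kne : (2:ℝ) ^ k ≠ 0 := by positivity
    field_simp
    have hxy : (2:ℝ) ^ k * (1/2) ^ k = 1 := by rw [← mul_pow]; norm_num
    linear_combination ((2:ℝ) ^ k * (1/2) ^ k + 1) * hxy
  -- positivity of g on [0, 1/2]
  have hgpos : ∀ μ : ℝ, μ ≤ 1/2 → 0 < A + ((1 - μ) / 2) ^ k := by
    intro μ hμ
    have hle : ((1 - (1/2:ℝ)) / 2) ^ k ≤ ((1 - μ) / 2) ^ k := by
      apply pow_le_pow_left₀ (by norm_num)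
      linarith
    have hb2 : (0:ℝ) < b ^ 2 := by positivity
    have h5 : b ^ 2 ≤ A + ((1 - μ) / 2) ^ k := by rw [← hsq]; linarith
    exact lt_of_lt_of_le hb2 h5
  -- the log-rate function
  set f : ℝ → ℝ := fun μ =>
    c * Real.log (A + ((1 - μ) / 2) ^ k) - μ * Real.log μ
      - (1 - μ) * Real.log (1 - μ) + Real.log 2 with hf
  -- derivative at 1/2
  have hinner : HasDerivAt (fun μ : ℝ => (1 - μ) / 2) (-1 / 2) (1/2 : ℝ) := by
    have := ((hasDerivAt_id (1/2:ℝ)).const_sub 1).div_const 2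
    simpa using this
  have hpow : HasDerivAt (fun μ : ℝ => ((1 - μ) / 2) ^ k)
      ((k : ℝ) * ((1 - (1/2:ℝ)) / 2) ^ (k - 1) * (-1 / 2)) (1/2 : ℝ) := hinner.pow k
  have hg : HasDerivAt (fun μ : ℝ => A + ((1 - μ) / 2) ^ k)
      ((k : ℝ) * ((1 - (1/2:ℝ)) / 2) ^ (k - 1) * (-1 / 2)) (1/2 : ℝ) :=
    hpow.const_add A
  have hgne : A + ((1 - (1/2:ℝ)) / 2) ^ k ≠ 0 := ne_of_gt (hgpos _ le_rfl)
  have hlogg : HasDerivAt (fun μ : ℝ => c * Real.log (A + ((1 - μ) / 2) ^ k))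
      (c * (((k : ℝ) * ((1 - (1/2:ℝ)) / 2) ^ (k - 1) * (-1 / 2))
        / (A + ((1 - (1/2:ℝ)) / 2) ^ k))) (1/2 : ℝ) :=
    (hg.log hgne).const_mul c
  have hmul1 : HasDerivAt (fun μ : ℝ => μ * Real.log μ) (Real.log (1/2) + 1) (1/2 : ℝ) :=
    Real.hasDerivAt_mul_log (by norm_num)
  have hmul2 : HasDerivAt (fun μ : ℝ => (1 - μ) * Real.log (1 - μ))
      ((Real.log (1 - (1/2:ℝ)) + 1) * (-1)) (1/2 : ℝ) := by
    have hlin : HasDerivAt (fun μ : ℝ => 1 - μ) (-1) (1/2 : ℝ) := by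
      simpa using (hasDerivAt_id (1/2:ℝ)).const_sub 1
    have := (Real.hasDerivAt_mul_log
      (by norm_num : (1 - (1/2:ℝ)) ≠ 0)).comp (1/2 : ℝ) hlin
    exact this
  set D : ℝ := c * (((k : ℝ) * ((1 - (1/2:ℝ)) / 2) ^ (k - 1) * (-1 / 2))
        / (A + ((1 - (1/2:ℝ)) / 2) ^ k)) with hD
  have hfD : HasDerivAt f
      (D - (Real.log (1/2) + 1) - (Real.log (1 - (1/2:ℝ)) + 1) * (-1)) (1/2 : ℝ) :=
    ((hlogg.sub hmul1).sub hmul2).add_const (Real.log 2)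
  have hDeq : D - (Real.log (1/2) + 1) - (Real.log (1 - (1/2:ℝ)) + 1) * (-1) = D := by
    norm_num
    ring
  rw [hDeq] at hfD
  have hDneg : D < 0 := by
    apply mul_neg_of_pos_of_neg hc
    apply div_neg_of_neg_of_pos
    · have hkpos : (0:ℝ) < (k:ℝ) := by exact_mod_cast hk
      have : (0:ℝ) < ((1 - (1/2:ℝ)) / 2) ^ (k - 1) := by positivity
      nlinarith
    · exact hgpos _ le_rfl
  obtain ⟨μ, hμmem, hμlt⟩ := exists_gt_of_deriv_neg hfD hDneg (by norm_num : (0:ℝ) < 1/2)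
  refine ⟨μ, hμmem, ?_⟩
  obtain ⟨hμ0, hμhalf⟩ := hμmem
  have hμ1 : μ < 1 := by linarith
  have hgμ : 0 < A + ((1 - μ) / 2) ^ k := hgpos μ hμhalf.le
  -- exp (f (1/2)) = LHS
  have hL : 4 * b ^ (2 * c) = Real.exp (f (1/2)) := by
    have : f (1/2) = Real.log b * (2 * c) + Real.log 4 := by
      simp only [hf]
      rw [hsq, Real.log_pow]
      rw [show (1:ℝ) - 1/2 = 1/2 by norm_num]
      rw [show Real.log (1/2 : ℝ) = - Real.log 2 by rw [one_div, Real.log_inv]]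
      rw [show Real.log (4:ℝ) = 2 * Real.log 2 by
        rw [show (4:ℝ) = 2 ^ 2 by norm_num, Real.log_pow]; push_cast; ring]
      push_cast
      ring
    rw [this, Real.exp_add, Real.exp_log (by norm_num : (0:ℝ) < 4),
      ← Real.rpow_def_of_pos hbpos]
    ring
  -- exp (f μ) = RHS
  have hR : Real.exp (f μ)
      = 2 * (A + ((1 - μ) / 2) ^ k) ^ c / (μ ^ μ * (1 - μ) ^ (1 - μ)) := by
    have e1 : (A + ((1 - μ) / 2) ^ k) ^ c
        = Real.exp (c * Real.log (A + ((1 - μ) / 2) ^ k)) := by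
      rw [Real.rpow_def_of_pos hgμ, mul_comm]
    have e2 : μ ^ μ = Real.exp (μ * Real.log μ) := by
      rw [Real.rpow_def_of_pos hμ0, mul_comm]
    have e3 : (1 - μ) ^ (1 - μ) = Real.exp ((1 - μ) * Real.log (1 - μ)) := by
      rw [Real.rpow_def_of_pos (by linarith : (0:ℝ) < 1 - μ), mul_comm]
    simp only [hf]
    rw [e1, e2, e3, ← Real.exp_add, mul_div_assoc, ← Real.exp_sub,
      Real.exp_add, Real.exp_log two_pos, sub_sub]
    ring
  rw [hL, ← hR]
  exact Real.exp_lt_exp.mpr hμlt
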